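/- arXiv:2504.11676 — 3 statements merged into one kernel-verified Lean document; each statement's English description precedes it below -/
import Mathlib

section
/- For every real 3×3 matrix Q that is symmetric and traceless, ⟨f(Q), Q⟩_F ≤ (γ/2)·‖Q‖_F²·(b − ‖Q‖_F²), and consequently ⟨f(Q), Q⟩_F ≤ γ·b²/8. -/
open Matrix

/-- The Q-tensor bulk nonlinearity:
`f(Q) = −α·Q + β·(Q² − (1/3)·trace(Q²)·I) − γ·trace(Q²)·Q`. -/
noncomputable def fQ (α β γ : ℝ) (Q : Matrix (Fin 3) (Fin 3) ℝ) : Matrix (Fin 3) (Fin 3) ℝ :=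
  -(α • Q) + β • (Q * Q - ((Matrix.trace (Q * Q)) / 3) • (1 : Matrix (Fin 3) (Fin 3) ℝ))
    - (γ * Matrix.trace (Q * Q)) • Q

/-- The Frobenius inner product `⟨A,B⟩_F = trace(Aᵀ B)`. -/
def frobInner (A B : Matrix (Fin 3) (Fin 3) ℝ) : ℝ := Matrix.trace (Aᵀ * B)

/-- The Frobenius norm `‖A‖_F = (trace(Aᵀ A))^{1/2}`. -/
noncomputable def frobNorm (A : Matrix (Fin 3) (Fin 3) ℝ) : ℝ :=
  Real.sqrt (Matrix.trace (Aᵀ * A))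

/-- With `b = β²/γ² − 2α/γ`, for symmetric traceless `Q`:
`⟨f(Q),Q⟩_F ≤ (γ/2)‖Q‖_F²(b − ‖Q‖_F²)`, and consequently `⟨f(Q),Q⟩_F ≤ γ·b²/8`. -/
theorem stmt7 (α β γ : ℝ) (hγ : 0 < γ) (b : ℝ) (hb : b = β ^ 2 / γ ^ 2 - 2 * α / γ)
    (Q : Matrix (Fin 3) (Fin 3) ℝ) (hQsymm : Qᵀ = Q) (hQtr : Matrix.trace Q = 0) :
    frobInner (fQ α β γ Q) Q ≤ (γ / 2) * frobNorm Q ^ 2 * (b - frobNorm Q ^ 2) ∧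
      frobInner (fQ α β γ Q) Q ≤ γ * b ^ 2 / 8 := by
  have hsym : ∀ i j, Q j i = Q i j := fun i j => by
    conv_lhs => rw [← hQsymm, Matrix.transpose_apply]
  set s : ℝ := ∑ i : Fin 3, ∑ j : Fin 3, Q i j ^ 2 with hs
  have hs0 : 0 ≤ s := Finset.sum_nonneg fun i _ =>
    Finset.sum_nonneg fun j _ => sq_nonneg _
  have htQQ : Matrix.trace (Q * Q) = s := by
    simp only [Matrix.trace, Matrix.diag, Matrix.mul_apply, hs]
    refine Finset.sum_congr rfl fun i _ => Finset.sum_congr rfl fun j _ => ?_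
    rw [hsym j i, sq]
  set c : ℝ := Matrix.trace (Q * Q * Q) with hc
  -- expand c as a double sum
  have hcsum : c = ∑ i : Fin 3, ∑ j : Fin 3, (Q * Q) i j * Q i j := by
    simp only [hc, Matrix.trace, Matrix.diag, Matrix.mul_apply (M := Q * Q)]
    exact Finset.sum_congr rfl fun i _ => Finset.sum_congr rfl fun j _ => by rw [hsym j i]
  -- Cauchy-Schwarz step 1
  have hcs1 : c ^ 2 ≤ (∑ i : Fin 3, ∑ j : Fin 3, ((Q * Q) i j) ^ 2) * s := by
    have := Finset.sum_mul_sq_le_sq_mul_sq (Finset.univ : Finset (Fin 3 × Fin 3))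
      (fun p => (Q * Q) p.1 p.2) (fun p => Q p.1 p.2)
    simpa [Fintype.sum_prod_type, hcsum, hs] using this
  -- Cauchy-Schwarz step 2 : entrywise
  have hcs2 : (∑ i : Fin 3, ∑ j : Fin 3, ((Q * Q) i j) ^ 2) ≤ s * s := by
    have hpt : ∀ i j : Fin 3, ((Q * Q) i j) ^ 2 ≤
        (∑ k : Fin 3, Q i k ^ 2) * (∑ k : Fin 3, Q k j ^ 2) := by
      intro i j
      have := Finset.sum_mul_sq_le_sq_mul_sq (Finset.univ : Finset (Fin 3))
        (fun k => Q i k) (fun k => Q k j)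
      simpa [Matrix.mul_apply] using this
    calc (∑ i : Fin 3, ∑ j : Fin 3, ((Q * Q) i j) ^ 2)
        ≤ ∑ i : Fin 3, ∑ j : Fin 3,
            (∑ k : Fin 3, Q i k ^ 2) * (∑ k : Fin 3, Q k j ^ 2) :=
          Finset.sum_le_sum fun i _ => Finset.sum_le_sum fun j _ => hpt i j
      _ = (∑ i : Fin 3, ∑ k : Fin 3, Q i k ^ 2) *
            (∑ j : Fin 3, ∑ k : Fin 3, Q k j ^ 2) := by
          rw [Finset.sum_mul]
          exact Finset.sum_congr rfl fun i _ => by rw [← Finset.mul_sum]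
      _ = s * s := by rw [Finset.sum_comm (f := fun j k => Q k j ^ 2)]
  have hc3 : c ^ 2 ≤ s * s * s :=
    hcs1.trans (by nlinarith [hcs2, hs0])
  -- frobNorm squared
  have hfn : frobNorm Q ^ 2 = s := by
    rw [frobNorm, hQsymm, Real.sq_sqrt (by rw [htQQ]; exact hs0), htQQ]
  -- frobInner expansion
  have hF : frobInner (fQ α β γ Q) Q = -α * s + β * c - γ * s * s := by
    simp only [frobInner, fQ, Matrix.transpose_add, Matrix.transpose_sub,
      Matrix.transpose_smul, Matrix.transpose_neg, Matrix.transpose_mul,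
      Matrix.transpose_one, hQsymm, Matrix.add_mul, Matrix.sub_mul,
      Matrix.smul_mul, Matrix.neg_mul, Matrix.one_mul,
      Matrix.trace_add, Matrix.trace_sub, Matrix.trace_smul, Matrix.trace_neg,
      smul_eq_mul, hQtr, htQQ, ← hc]
    ring_nf
  -- key inequality: β*c ≤ β^2*s/(2γ) + γ*s^2/2
  have hkey : 2 * γ * (β * c) ≤ β ^ 2 * s + γ ^ 2 * s ^ 2 := by
    have h4 : 4 * β ^ 2 * γ ^ 2 * c ^ 2 ≤ 4 * β ^ 2 * γ ^ 2 * (s * s * s) := by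
      have : (0:ℝ) ≤ 4 * β ^ 2 * γ ^ 2 := by positivity
      nlinarith [mul_le_mul_of_nonneg_left hc3 this]
    have hR : (0:ℝ) ≤ β ^ 2 * s + γ ^ 2 * s ^ 2 := by positivity
    nlinarith [h4, sq_nonneg (β ^ 2 * s - γ ^ 2 * s ^ 2), hR]
  have h1 : frobInner (fQ α β γ Q) Q ≤ (γ / 2) * frobNorm Q ^ 2 * (b - frobNorm Q ^ 2) := by
    rw [hF, hfn, hb, ← sub_nonneg]
    have hγ' : γ ≠ 0 := ne_of_gt hγ
    have hrw : γ / 2 * s * (β ^ 2 / γ ^ 2 - 2 * α / γ - s) - (-α * s + β * c - γ * s * s)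
        = (β ^ 2 * s + γ ^ 2 * s ^ 2 - 2 * γ * (β * c)) / (2 * γ) := by
      field_simp
      ring
    rw [hrw]
    exact div_nonneg (by linarith) (by positivity)
  refine ⟨h1, h1.trans ?_⟩
  nlinarith [mul_nonneg hγ.le (sq_nonneg (b - 2 * frobNorm Q ^ 2)), sq_nonneg (frobNorm Q)]
end

section
/- Let a > 0 satisfy b < a². Then there exists τ₀ > 0 (depending only on α, β, γ, a) such that for every time step 0 < τ ≤ τ₀ and every real 3×3 matrix Q that is symmetric and traceless with ‖Q‖_F ≤ a, one has ‖Q + τ·f(Q)‖_F ≤ a. -/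
open Matrix

attribute [local instance] Matrix.frobeniusNormedAddCommGroup Matrix.frobeniusNormedSpace

section Stmt12Aux

open RealInnerProductSpace

/-- Embedding of 3×3 matrices into Euclidean space, carrying the Frobenius norm. -/
noncomputable def emb (A : Matrix (Fin 3) (Fin 3) ℝ) : EuclideanSpace ℝ (Fin 3 × Fin 3) :=
  (WithLp.equiv 2 _).symm (fun p => A p.1 p.2)

lemma emb_add (A B : Matrix (Fin 3) (Fin 3) ℝ) : emb (A + B) = emb A + emb B := rfl
lemma emb_smul (c : ℝ) (A : Matrix (Fin 3) (Fin 3) ℝ) : emb (c • A) = c • emb A := rfl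
lemma emb_neg (A : Matrix (Fin 3) (Fin 3) ℝ) : emb (-A) = - emb A := rfl
lemma emb_sub (A B : Matrix (Fin 3) (Fin 3) ℝ) : emb (A - B) = emb A - emb B := rfl

lemma inner_emb (A B : Matrix (Fin 3) (Fin 3) ℝ) :
    ⟪emb A, emb B⟫ = Matrix.trace (Aᵀ * B) := by
  simp [emb, PiLp.inner_apply, RCLike.inner_apply, Matrix.trace, Matrix.diag,
    Matrix.mul_apply, Matrix.transpose_apply, Fintype.sum_prod_type]
  rw [Finset.sum_comm]
  exact Finset.sum_congr rfl fun _ _ => Finset.sum_congr rfl fun _ _ => mul_comm _ _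

lemma norm_emb_sq (A : Matrix (Fin 3) (Fin 3) ℝ) :
    ‖emb A‖ ^ 2 = ∑ i, ∑ j, (A i j) ^ 2 := by
  rw [← real_inner_self_eq_norm_sq, inner_emb]
  simp [Matrix.trace, Matrix.diag, Matrix.mul_apply, Matrix.transpose_apply, sq]
  rw [Finset.sum_comm]

lemma norm_emb_mul_le (A B : Matrix (Fin 3) (Fin 3) ℝ) :
    ‖emb (A * B)‖ ≤ ‖emb A‖ * ‖emb B‖ := by
  have h2 : ‖emb (A * B)‖ ^ 2 ≤ (‖emb A‖ * ‖emb B‖) ^ 2 := by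
    rw [mul_pow, norm_emb_sq, norm_emb_sq, norm_emb_sq]
    calc ∑ i, ∑ j, ((A * B) i j) ^ 2
        ≤ ∑ i, ∑ j, (∑ k, (A i k)^2) * (∑ k, (B k j)^2) := by
          refine Finset.sum_le_sum fun i _ => Finset.sum_le_sum fun j _ => ?_
          rw [Matrix.mul_apply]
          exact Finset.sum_mul_sq_le_sq_mul_sq _ _ _
      _ = (∑ i, ∑ k, (A i k)^2) * (∑ j, ∑ k, (B k j)^2) := by
          rw [Finset.sum_mul_sum]
      _ = (∑ i, ∑ j, (A i j)^2) * (∑ i, ∑ j, (B i j)^2) := by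
          rw [Finset.sum_comm (f := fun j k => (B k j)^2)]
  have h3 := Real.sqrt_le_sqrt h2
  rwa [Real.sqrt_sq (norm_nonneg _),
    Real.sqrt_sq (mul_nonneg (norm_nonneg _) (norm_nonneg _))] at h3

lemma frobNorm_eq (A : Matrix (Fin 3) (Fin 3) ℝ) : frobNorm A = ‖emb A‖ := by
  rw [frobNorm, ← inner_emb, real_inner_self_eq_norm_sq, Real.sqrt_sq (norm_nonneg _)]

lemma norm_emb_one_le : ‖emb (1 : Matrix (Fin 3) (Fin 3) ℝ)‖ ≤ 2 := by
  have h : ‖emb (1 : Matrix (Fin 3) (Fin 3) ℝ)‖ ^ 2 = 3 := by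
    rw [norm_emb_sq]
    simp [Fin.sum_univ_three, Matrix.one_apply]
  nlinarith [norm_nonneg (emb (1 : Matrix (Fin 3) (Fin 3) ℝ))]

end Stmt12Aux

set_option maxHeartbeats 1000000 in
open RealInnerProductSpace in
/-- Stability of the Euler step: if `b < a²` then for small enough `τ`,
`‖Q + τ·f(Q)‖_F ≤ a` for symmetric traceless `Q` with `‖Q‖_F ≤ a`. -/
theorem stmt12 (α β γ : ℝ) (hγ : 0 < γ) (b : ℝ) (hb : b = β ^ 2 / γ ^ 2 - 2 * α / γ)
    (a : ℝ) (ha : 0 < a) (hba : b < a ^ 2) :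
    ∃ τ₀ : ℝ, 0 < τ₀ ∧
      ∀ τ : ℝ, 0 < τ → τ ≤ τ₀ →
        ∀ Q : Matrix (Fin 3) (Fin 3) ℝ, Qᵀ = Q → Matrix.trace Q = 0 → frobNorm Q ≤ a →
          frobNorm (Q + τ • fQ α β γ Q) ≤ a := by
  -- the key algebraic positivity coming from `b < a²`
  have h : β ^ 2 - 2 * α * γ < a ^ 2 * γ ^ 2 := by
    have h2 : β ^ 2 / γ ^ 2 - 2 * α / γ < a ^ 2 := hb ▸ hba
    have hγ2 : (0:ℝ) < γ ^ 2 := by positivity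
    calc β ^ 2 - 2 * α * γ = (β ^ 2 / γ ^ 2 - 2 * α / γ) * γ ^ 2 := by field_simp
      _ < a ^ 2 * γ ^ 2 := mul_lt_mul_of_pos_right h2 hγ2
  set q : ℝ := γ * a ^ 2 - |β| * a + α with hqdef
  have hq : 0 < q := by
    have h1 : 0 < γ * a ^ 2 + 2 * α := by nlinarith [sq_nonneg β]
    have h2 : 0 < γ * a ^ 2 + α := by nlinarith [mul_pos hγ (pow_pos ha 2)]
    by_contra hcon
    push_neg at hcon
    have hE : γ * a ^ 2 + α ≤ |β| * a := by rw [hqdef] at hcon; linarith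
    have key : (γ * a ^ 2 + α) ^ 2 ≤ β ^ 2 * a ^ 2 := by
      have h3 := mul_le_mul hE hE h2.le (mul_nonneg (abs_nonneg β) ha.le)
      calc (γ * a ^ 2 + α) ^ 2 = (γ * a ^ 2 + α) * (γ * a ^ 2 + α) := sq (γ * a ^ 2 + α)
        _ ≤ (|β| * a) * (|β| * a) := h3
        _ = β ^ 2 * a ^ 2 := by rw [← sq_abs β]; ring
    have h4 := mul_lt_mul_of_pos_right h (pow_pos ha 2)
    nlinarith [key, h4, sq_nonneg α]
  set C : ℝ := |α| * a + 2 * |β| * a ^ 2 + γ * a ^ 3 + 1 with hCdef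
  have hC : 1 ≤ C := by
    have : 0 ≤ |α| * a + 2 * |β| * a ^ 2 + γ * a ^ 3 := by positivity
    linarith
  have hC0 : 0 < C := by linarith
  refine ⟨min (min (1 / (4 * γ * a ^ 2 + 1)) (a / (2 * C))) (a ^ 2 * q / C ^ 2),
    lt_min (lt_min (by positivity) (by positivity)) (by positivity), ?_⟩
  intro τ hτ hττ Q hsym htr hnorm
  have hτ1 : τ * (4 * γ * a ^ 2 + 1) ≤ 1 := by
    have h1 : τ ≤ 1 / (4 * γ * a ^ 2 + 1) := le_trans hττ (le_trans (min_le_left _ _) (min_le_left _ _))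
    have h2 : (0:ℝ) < 4 * γ * a ^ 2 + 1 := by positivity
    rw [le_div_iff₀ h2] at h1
    linarith
  have hτ2 : τ * (2 * C) ≤ a := by
    have h1 : τ ≤ a / (2 * C) := le_trans hττ (le_trans (min_le_left _ _) (min_le_right _ _))
    have h2 : (0:ℝ) < 2 * C := by linarith
    rw [le_div_iff₀ h2] at h1
    linarith
  have hτ3 : τ * C ^ 2 ≤ a ^ 2 * q := by
    have h1 : τ ≤ a ^ 2 * q / C ^ 2 := le_trans hττ (min_le_right _ _)
    have h2 : (0:ℝ) < C ^ 2 := by positivity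
    rw [le_div_iff₀ h2] at h1
    linarith
  -- notation
  set u : EuclideanSpace ℝ (Fin 3 × Fin 3) := emb Q with hu
  set w : EuclideanSpace ℝ (Fin 3 × Fin 3) := emb (Q * Q) with hw
  set e : EuclideanSpace ℝ (Fin 3 × Fin 3) := emb (1 : Matrix (Fin 3) (Fin 3) ℝ) with he
  set x : ℝ := ‖u‖ ^ 2 with hx
  have hx0 : 0 ≤ x := sq_nonneg _
  have hua : ‖u‖ ≤ a := by rw [hu, ← frobNorm_eq]; exact hnorm
  have hxa : x ≤ a ^ 2 := by
    rw [hx]; exact pow_le_pow_left₀ (norm_nonneg _) hua 2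
  have htrQQ : Matrix.trace (Q * Q) = x := by
    rw [show Q * Q = Qᵀ * Q by rw [hsym], ← inner_emb, ← hu, real_inner_self_eq_norm_sq, hx]
  have hwn : ‖w‖ ≤ ‖u‖ * ‖u‖ := norm_emb_mul_le Q Q
  have hue0 : ⟪u, e⟫ = 0 := by
    rw [hu, he, inner_emb, Matrix.mul_one, Matrix.trace_transpose, htr]
  have he2 : ‖e‖ ≤ 2 := norm_emb_one_le
  clear_value u w e x
  obtain ⟨v, hv⟩ : ∃ v : EuclideanSpace ℝ (Fin 3 × Fin 3),
      v = -(α • u) + β • (w - (x / 3) • e) - (γ * x) • u := ⟨_, rfl⟩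
  have hvemb : emb (fQ α β γ Q) = v := by
    rw [hv, fQ, htrQQ, emb_sub, emb_add, emb_neg, emb_smul, emb_smul, emb_smul, emb_sub,
      emb_smul, ← hu, ← hw, ← he]
  have hD : ⟪u, v⟫ ≤ x * ((|β| * a - α) - γ * x) := by
    have hDval : ⟪u, v⟫ = -(α * x) + β * ⟪u, w⟫ - γ * x * x := by
      rw [hv]
      simp only [inner_sub_right, inner_add_right, inner_neg_right, inner_smul_right,
        real_inner_self_eq_norm_sq, hue0, ← hx]
      ring
    have ht3 : β * ⟪u, w⟫ ≤ |β| * (a * x) := by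
      have h1 : |(⟪u, w⟫ : ℝ)| ≤ ‖u‖ * ‖w‖ := abs_real_inner_le_norm u w
      have h2 : ‖u‖ * ‖w‖ ≤ a * x := by
        rw [hx]
        nlinarith [norm_nonneg u, norm_nonneg w, hua, hwn]
      calc β * ⟪u, w⟫ ≤ |β * ⟪u, w⟫| := le_abs_self _
        _ = |β| * |(⟪u, w⟫ : ℝ)| := abs_mul _ _
        _ ≤ |β| * (a * x) := by
            refine mul_le_mul_of_nonneg_left (le_trans h1 h2) (abs_nonneg β)
    nlinarith [hDval, ht3, hx0]
  have hvC : ‖v‖ ≤ C := by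
    have t1 : ‖v‖ ≤ |α| * ‖u‖ + |β| * (‖w‖ + (x / 3) * ‖e‖) + γ * x * ‖u‖ := by
      rw [hv]
      calc ‖-(α • u) + β • (w - (x / 3) • e) - (γ * x) • u‖
          ≤ ‖-(α • u) + β • (w - (x / 3) • e)‖ + ‖(γ * x) • u‖ := norm_sub_le _ _
        _ ≤ ‖-(α • u)‖ + ‖β • (w - (x / 3) • e)‖ + ‖(γ * x) • u‖ := by
            exact add_le_add_left (norm_add_le _ _) _
        _ = |α| * ‖u‖ + |β| * ‖w - (x / 3) • e‖ + |γ * x| * ‖u‖ := by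
            rw [norm_neg, norm_smul, norm_smul, norm_smul]
            simp [Real.norm_eq_abs, abs_mul]
        _ ≤ |α| * ‖u‖ + |β| * (‖w‖ + (x / 3) * ‖e‖) + |γ * x| * ‖u‖ := by
            refine add_le_add_left
              (add_le_add_right (mul_le_mul_of_nonneg_left ?_ (abs_nonneg β)) _) _
            calc ‖w - (x / 3) • e‖ ≤ ‖w‖ + ‖(x / 3) • e‖ := norm_sub_le _ _
              _ = ‖w‖ + (x / 3) * ‖e‖ := by
                  rw [norm_smul, Real.norm_eq_abs, abs_of_nonneg (by linarith : (0:ℝ) ≤ x / 3)]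
        _ = |α| * ‖u‖ + |β| * (‖w‖ + (x / 3) * ‖e‖) + γ * x * ‖u‖ := by
            rw [abs_of_nonneg (mul_nonneg hγ.le hx0)]
    have hwn' : ‖w‖ ≤ a ^ 2 := by
      calc ‖w‖ ≤ ‖u‖ * ‖u‖ := hwn
        _ = x := by rw [hx]; ring
        _ ≤ a ^ 2 := hxa
    have hcub : γ * x * ‖u‖ ≤ γ * a ^ 3 := by
      have h5 : x * ‖u‖ ≤ a ^ 2 * a := by
        nlinarith [norm_nonneg u, hua, hxa, hx0]
      nlinarith [h5]
    have h1 : |α| * ‖u‖ ≤ |α| * a := mul_le_mul_of_nonneg_left hua (abs_nonneg α)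
    have h2 : |β| * (‖w‖ + (x / 3) * ‖e‖) ≤ 2 * |β| * a ^ 2 := by
      have h6 : ‖w‖ + (x / 3) * ‖e‖ ≤ 2 * a ^ 2 := by
        have h7 : (x / 3) * ‖e‖ ≤ a ^ 2 := by nlinarith [norm_nonneg e, he2, hxa, hx0]
        linarith
      nlinarith [abs_nonneg β, h6]
    rw [hCdef]
    linarith [t1, h1, h2, hcub]
  -- reduce the goal to a scalar inequality
  rw [frobNorm_eq, emb_add, emb_smul, ← hu, hvemb]
  have hgoal : ‖u + τ • v‖ ^ 2 ≤ a ^ 2 → ‖u + τ • v‖ ≤ a := by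
    intro hsq
    have h3 := Real.sqrt_le_sqrt hsq
    rwa [Real.sqrt_sq (norm_nonneg _), Real.sqrt_sq ha.le] at h3
  refine hgoal ?_
  rw [norm_add_sq_real, real_inner_smul_right, norm_smul, Real.norm_eq_abs,
    abs_of_pos hτ, ← hx]
  -- now a purely scalar inequality
  have hvn : 0 ≤ ‖v‖ := norm_nonneg v
  clear hv hvemb hue0 hwn hnorm hsym htr htrQQ hb hba h hττ hu hw he
  clear_value q C
  have stepA : (τ * ‖v‖) ^ 2 ≤ τ ^ 2 * C ^ 2 := by
    rw [mul_pow]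
    exact mul_le_mul_of_nonneg_left (pow_le_pow_left₀ hvn hvC 2) (sq_nonneg τ)
  have stepB : 2 * (τ * ⟪u, v⟫) ≤ 2 * τ * (x * ((|β| * a - α) - γ * x)) := by
    have h8 := mul_le_mul_of_nonneg_left hD (by linarith : (0:ℝ) ≤ 2 * τ)
    linarith
  have hgx : 2 * τ * γ * x ≤ 1 / 2 := by
    have h1 : γ * x ≤ γ * a ^ 2 := mul_le_mul_of_nonneg_left hxa hγ.le
    have h2 : τ * (γ * x) ≤ τ * (γ * a ^ 2) := mul_le_mul_of_nonneg_left h1 hτ.le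
    linarith [h2, hτ1, hτ.le]
  have key : x + 2 * τ * (x * ((|β| * a - α) - γ * x)) + τ ^ 2 * C ^ 2 ≤ a ^ 2 := by
    rcases le_or_gt x (a ^ 2 / 2) with hcase | hcase
    · have P1 : a ^ 2 / 2 * (1 / 2) ≤ (a ^ 2 - x) * (1 - 2 * τ * γ * x) := by
        have f1 : a ^ 2 / 2 ≤ a ^ 2 - x := by linarith
        have f2 : (1:ℝ) / 2 ≤ 1 - 2 * τ * γ * x := by linarith
        exact mul_le_mul f1 f2 (by norm_num) (by linarith)
      have P2 : 0 ≤ τ * (x * q) := by positivity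
      have P3 : τ ^ 2 * C ^ 2 ≤ a ^ 2 / 4 := by
        have f3 : (0:ℝ) ≤ τ * C := mul_nonneg hτ.le hC0.le
        have f4 : (τ * C) * (τ * C) ≤ (a / 2) * (a / 2) :=
          mul_le_mul (by linarith) (by linarith) f3 (by linarith)
        linarith [f4]
      rw [hqdef] at P2
      linarith [P1, P2, P3]
    · have P1 : 0 ≤ (a ^ 2 - x) * (1 - 2 * τ * γ * x) := by
        have f1 : (0:ℝ) ≤ a ^ 2 - x := by linarith
        have f2 : (0:ℝ) ≤ 1 - 2 * τ * γ * x := by linarith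
        exact mul_nonneg f1 f2
      have P2 : τ * (a ^ 2 * q) ≤ 2 * τ * (x * q) := by
        have h9 : a ^ 2 / 2 * q ≤ x * q := mul_le_mul_of_nonneg_right hcase.le hq.le
        have h10 := mul_le_mul_of_nonneg_left h9 (by linarith : (0:ℝ) ≤ 2 * τ)
        linarith [h10]
      have P3 : τ ^ 2 * C ^ 2 ≤ τ * (a ^ 2 * q) := by
        have h11 := mul_le_mul_of_nonneg_left hτ3 hτ.le
        linarith [h11]
      rw [hqdef] at P2 P3
      linarith [P1, P2, P3]
  calc x + 2 * (τ * ⟪u, v⟫) + (τ * ‖v‖) ^ 2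
      ≤ x + 2 * τ * (x * ((|β| * a - α) - γ * x)) + τ ^ 2 * C ^ 2 := by linarith
    _ ≤ a ^ 2 := key
end

section
/- Let a > 0 satisfy b < a². Then there exists τ₀ > 0 (depending only on α, β, γ, a) such that for every 0 < τ ≤ τ₀ the following discrete maximum bound principle holds for the second-order scheme: if Q : ℕ → (real 3×3 matrices) satisfies Q_{m+1} = Q_m + τ·f(Q_m) + (τ²/2)·Df(Q_m)[f(Q_m)] for all m, where Df(Q)[f(Q)] is the Fréchet derivative of the map Q ↦ f(Q) at Q applied to f(Q), and Q₀ is symmetric and traceless with ‖Q₀‖_F ≤ a, then for every m ≥ 0 the matrix Q_m is symmetric and traceless and ‖Q_m‖_F ≤ a. -/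
open Matrix

attribute [local instance] Matrix.frobeniusNormedAddCommGroup Matrix.frobeniusNormedSpace
attribute [local instance] Matrix.frobeniusNormedRing Matrix.frobeniusNormedAlgebra
set_option maxHeartbeats 1000000


local notation "M3" => Matrix (Fin 3) (Fin 3) ℝ

noncomputable def mip (A B : M3) : ℝ := ∑ i, ∑ j, A i j * B i j

lemma mip_comm (A B : M3) : mip A B = mip B A := by
  simp [mip, mul_comm]

lemma mip_add_right (A B C : M3) : mip A (B + C) = mip A B + mip A C := by
  simp [mip, mul_add, Finset.sum_add_distrib]

lemma mip_smul_right (c : ℝ) (A B : M3) : mip A (c • B) = c * mip A B := by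
  simp only [mip, Matrix.smul_apply, smul_eq_mul, Finset.mul_sum]
  congr 1; ext i; congr 1; ext j; ring

lemma mip_self_nonneg (A : M3) : 0 ≤ mip A A := by
  apply Finset.sum_nonneg; intro i _; apply Finset.sum_nonneg; intro j _; exact mul_self_nonneg _

lemma trace_transpose_mul_eq_mip (A B : M3) : Matrix.trace (Aᵀ * B) = mip A B := by
  simp [Matrix.trace, Matrix.mul_apply, mip, Matrix.diag]
  rw [Finset.sum_comm]

lemma trace_mul_eq_mip (A B : M3) (hA : Aᵀ = A) : Matrix.trace (A * B) = mip A B := by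
  rw [← trace_transpose_mul_eq_mip, hA]

lemma norm_sq_eq_mip (A : M3) : ‖A‖ ^ 2 = mip A A := by
  rw [Matrix.frobenius_norm_def]
  rw [← Real.rpow_natCast _ 2, ← Real.rpow_mul (by positivity)]
  norm_num
  simp [mip, sq_abs, sq]

lemma norm_eq_sqrt_mip (A : M3) : ‖A‖ = Real.sqrt (mip A A) := by
  rw [← norm_sq_eq_mip, Real.sqrt_sq (norm_nonneg _)]

lemma frobNorm_eq_s15 (A : M3) : Real.sqrt (Matrix.trace (Aᵀ * A)) = ‖A‖ := by
  rw [trace_transpose_mul_eq_mip, norm_eq_sqrt_mip]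

lemma mip_cs (A B : M3) : mip A B ^ 2 ≤ mip A A * mip B B := by
  have h := Finset.sum_mul_sq_le_sq_mul_sq Finset.univ
    (fun p : Fin 3 × Fin 3 => A p.1 p.2) (fun p : Fin 3 × Fin 3 => B p.1 p.2)
  simpa [mip, Fintype.sum_prod_type, sq] using h

lemma mip_le_norm (A B : M3) : mip A B ≤ ‖A‖ * ‖B‖ := by
  have h := mip_cs A B
  have h2 : mip A A * mip B B = (‖A‖ * ‖B‖) ^ 2 := by
    rw [mul_pow, norm_sq_eq_mip, norm_sq_eq_mip]
  nlinarith [norm_nonneg A, norm_nonneg B, mul_nonneg (norm_nonneg A) (norm_nonneg B)]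

noncomputable def traceCLM : M3 →L[ℝ] ℝ :=
  LinearMap.toContinuousLinearMap (Matrix.traceLinearMap (Fin 3) ℝ ℝ)

@[simp] lemma traceCLM_apply (A : M3) : traceCLM A = Matrix.trace A := rfl

lemma fQ_hasFDerivAt (α β γ : ℝ) (Q : M3) :
    HasFDerivAt (fQ α β γ)
      ((-(α • ContinuousLinearMap.id ℝ M3)
        + β • ((Q • ContinuousLinearMap.id ℝ M3
            + (ContinuousLinearMap.id ℝ M3).smulRight Q)
          - (((Matrix.trace (Q*Q))/3) • (0 : M3 →L[ℝ] M3)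
            + ((3:ℝ)⁻¹ • (traceCLM.comp (Q • ContinuousLinearMap.id ℝ M3
                + (ContinuousLinearMap.id ℝ M3).smulRight Q))).smulRight (1:M3))))
       - ((γ * Matrix.trace (Q*Q)) • ContinuousLinearMap.id ℝ M3
          + (γ • (traceCLM.comp (Q • ContinuousLinearMap.id ℝ M3
              + (ContinuousLinearMap.id ℝ M3).smulRight Q))).smulRight Q)) Q := by
  have idD := hasFDerivAt_id (𝕜 := ℝ) Q
  have sqD : HasFDerivAt (fun Y : M3 => Y * Y)
      (Q • ContinuousLinearMap.id ℝ M3 + (ContinuousLinearMap.id ℝ M3).smulRight Q) Q :=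
    idD.mul' idD
  have trD : HasFDerivAt (fun Y : M3 => Matrix.trace (Y * Y))
      (traceCLM.comp (Q • ContinuousLinearMap.id ℝ M3
        + (ContinuousLinearMap.id ℝ M3).smulRight Q)) Q :=
    traceCLM.hasFDerivAt.comp Q sqD
  have c3D : HasFDerivAt (fun Y : M3 => Matrix.trace (Y * Y) / 3)
      ((3:ℝ)⁻¹ • (traceCLM.comp (Q • ContinuousLinearMap.id ℝ M3
        + (ContinuousLinearMap.id ℝ M3).smulRight Q))) Q := by
    exact (trD.const_smul (R := ℝ) (3:ℝ)⁻¹).congr_of_eventuallyEq (Filter.Eventually.of_forall fun Y => by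
      show Matrix.trace (Y * Y) / 3 = (3:ℝ)⁻¹ * Matrix.trace (Y * Y)
      ring)
  have sm1D := c3D.smul (hasFDerivAt_const (1 : M3) Q)
  have t1D := (idD.const_smul (R := ℝ) α).neg
  have t2D := (sqD.sub sm1D).const_smul (R := ℝ) β
  have t3D := (((trD.const_mul γ)).smul idD)
  have := (t1D.add t2D).sub t3D
  exact this

lemma fderiv_fQ_apply (α β γ : ℝ) (Q H : M3) :
    fderiv ℝ (fQ α β γ) Q H =
      -(α • H) + β • (Q*H + H*Q
          - ((Matrix.trace (Q*H) + Matrix.trace (H*Q))/3) • (1:M3))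
        - ((γ * Matrix.trace (Q*Q)) • H
            + (γ * (Matrix.trace (Q*H) + Matrix.trace (H*Q))) • Q) := by
  rw [(fQ_hasFDerivAt α β γ Q).fderiv]
  simp only [ContinuousLinearMap.add_apply, ContinuousLinearMap.coe_sub',
    ContinuousLinearMap.neg_apply, ContinuousLinearMap.smul_apply, Pi.sub_apply,
    ContinuousLinearMap.smulRight_apply, ContinuousLinearMap.coe_comp', Function.comp_apply,
    ContinuousLinearMap.coe_smul', Pi.smul_apply, ContinuousLinearMap.id_apply,
    ContinuousLinearMap.zero_apply, traceCLM_apply, smul_eq_mul, Matrix.trace_add]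
  module

lemma mip_neg_right (A B : M3) : mip A (-B) = -mip A B := by
  simp [mip, Finset.sum_neg_distrib]

lemma mip_sub_right (A B C : M3) : mip A (B - C) = mip A B - mip A C := by
  simp [sub_eq_add_neg, mip_add_right, mip_neg_right]

lemma abs_mip_le (A B : M3) : |mip A B| ≤ ‖A‖ * ‖B‖ := by
  have h := mip_cs A B
  have h2 : mip A A * mip B B = (‖A‖ * ‖B‖) ^ 2 := by
    rw [mul_pow, norm_sq_eq_mip, norm_sq_eq_mip]
  nlinarith [abs_nonneg (mip A B), mul_nonneg (norm_nonneg A) (norm_nonneg B),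
    sq_abs (mip A B)]

lemma mip_one_right (A : M3) (hA : Matrix.trace A = 0) : mip A (1:M3) = 0 := by
  rw [← trace_transpose_mul_eq_mip, Matrix.mul_one, Matrix.trace_transpose, hA]

lemma norm_one_le : ‖(1:M3)‖ ≤ 2 := by
  have h : mip (1:M3) (1:M3) = 3 := by
    simp [mip, Matrix.one_apply, Fin.sum_univ_three]
  have h2 := norm_sq_eq_mip (1:M3)
  nlinarith [norm_nonneg (1:M3)]

lemma fQ_symm (α β γ : ℝ) (Q : M3) (hQ : Qᵀ = Q) : (fQ α β γ Q)ᵀ = fQ α β γ Q := by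
  simp [fQ, Matrix.transpose_add, Matrix.transpose_sub, Matrix.transpose_smul,
    Matrix.transpose_mul, hQ]

lemma fQ_traceless (α β γ : ℝ) (Q : M3) (hQ : Matrix.trace Q = 0) :
    Matrix.trace (fQ α β γ Q) = 0 := by
  simp [fQ, Matrix.trace_add, Matrix.trace_sub, Matrix.trace_smul, hQ, Matrix.trace_one]

lemma D_symm (α β γ : ℝ) (Q H : M3) (hQ : Qᵀ = Q) (hH : Hᵀ = H) :
    (fderiv ℝ (fQ α β γ) Q H)ᵀ = fderiv ℝ (fQ α β γ) Q H := by
  rw [fderiv_fQ_apply]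
  simp [Matrix.transpose_add, Matrix.transpose_sub, Matrix.transpose_smul,
    Matrix.transpose_mul, hQ, hH]
  module

lemma D_traceless (α β γ : ℝ) (Q H : M3) (hQ : Matrix.trace Q = 0)
    (hH : Matrix.trace H = 0) : Matrix.trace (fderiv ℝ (fQ α β γ) Q H) = 0 := by
  rw [fderiv_fQ_apply]
  simp [Matrix.trace_add, Matrix.trace_sub, Matrix.trace_smul, hQ, hH, Matrix.trace_one]

lemma norm_fQ_le (α β γ a : ℝ) (Q : M3) (hγ : 0 ≤ γ) (ha : 0 ≤ a)
    (hQ : Qᵀ = Q) (hQa : ‖Q‖ ≤ a) :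
    ‖fQ α β γ Q‖ ≤ |α| * a + 2 * |β| * a^2 + γ * a^3 := by
  have ht : Matrix.trace (Q*Q) = mip Q Q := trace_mul_eq_mip Q Q hQ
  have hs : mip Q Q = ‖Q‖^2 := (norm_sq_eq_mip Q).symm
  have hQ0 : (0:ℝ) ≤ ‖Q‖ := norm_nonneg Q
  set t := Matrix.trace (Q*Q) with htdef
  have ht0 : 0 ≤ t := by rw [ht]; exact mip_self_nonneg Q
  have hta : t ≤ a^2 := by rw [ht, hs]; nlinarith
  have tri : ‖fQ α β γ Q‖ ≤ ‖α • Q‖ + ‖β • (Q*Q - (t/3) • (1:M3))‖ + ‖(γ * t) • Q‖ := by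
    unfold fQ
    refine (norm_sub_le _ _).trans ?_
    gcongr
    exact (norm_add_le _ _).trans (by rw [norm_neg])
  have e1 : ‖α • Q‖ = |α| * ‖Q‖ := by rw [norm_smul, Real.norm_eq_abs]
  have e2 : ‖β • (Q*Q - (t/3) • (1:M3))‖ = |β| * ‖Q*Q - (t/3) • (1:M3)‖ := by
    rw [norm_smul, Real.norm_eq_abs]
  have e3 : ‖(γ * t) • Q‖ = |γ * t| * ‖Q‖ := by rw [norm_smul, Real.norm_eq_abs]
  have e4 : ‖Q*Q - (t/3) • (1:M3)‖ ≤ ‖Q‖*‖Q‖ + (t/3) * ‖(1:M3)‖ := by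
    refine (norm_sub_le _ _).trans ?_
    gcongr
    · exact norm_mul_le Q Q
    · rw [norm_smul, Real.norm_eq_abs, abs_of_nonneg (by positivity)]
  have e5 : |γ * t| = γ * t := abs_of_nonneg (by positivity)
  have h1 : ‖(1:M3)‖ ≤ 2 := norm_one_le
  have hb0 : (0:ℝ) ≤ |β| := abs_nonneg β
  have ha0 : (0:ℝ) ≤ |α| := abs_nonneg α
  have h10 : (0:ℝ) ≤ ‖(1:M3)‖ := norm_nonneg _
  have e6 : t/3 * ‖(1:M3)‖ ≤ a^2/3 * 2 := by
    have : t/3 ≤ a^2/3 := by linarith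
    exact mul_le_mul this h1 h10 (by positivity)
  have e7 : ‖Q‖*‖Q‖ ≤ a*a := mul_le_mul hQa hQa hQ0 ha
  have e9 : |β| * ‖Q*Q - (t/3) • (1:M3)‖ ≤ |β| * (a*a + a^2/3*2) :=
    mul_le_mul_of_nonneg_left (e4.trans (by linarith)) hb0
  have e10 : |α| * ‖Q‖ ≤ |α| * a := mul_le_mul_of_nonneg_left hQa ha0
  have e11 : (γ*t) * ‖Q‖ ≤ γ*a^2*a :=
    mul_le_mul (mul_le_mul_of_nonneg_left hta hγ) hQa hQ0 (by positivity)
  nlinarith [mul_nonneg hb0 (sq_nonneg a)]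

lemma norm_D_le (α β γ a : ℝ) (Q H : M3) (hγ : 0 ≤ γ) (ha : 0 ≤ a)
    (hQ : Qᵀ = Q) (hQa : ‖Q‖ ≤ a) :
    ‖fderiv ℝ (fQ α β γ) Q H‖ ≤ (|α| + 4 * |β| * a + 3 * γ * a^2) * ‖H‖ := by
  rw [fderiv_fQ_apply]
  have hQ0 : (0:ℝ) ≤ ‖Q‖ := norm_nonneg Q
  have hH0 : (0:ℝ) ≤ ‖H‖ := norm_nonneg H
  have ht : Matrix.trace (Q*Q) = mip Q Q := trace_mul_eq_mip Q Q hQ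
  have hs : mip Q Q = ‖Q‖^2 := (norm_sq_eq_mip Q).symm
  have ht0 : 0 ≤ Matrix.trace (Q*Q) := by rw [ht]; exact mip_self_nonneg Q
  have hta : Matrix.trace (Q*Q) ≤ a^2 := by rw [ht, hs]; nlinarith
  have htQH : |Matrix.trace (Q*H)| ≤ ‖Q‖ * ‖H‖ := by
    rw [trace_mul_eq_mip Q H hQ]; exact abs_mip_le Q H
  have htHQ : Matrix.trace (H*Q) = Matrix.trace (Q*H) := Matrix.trace_mul_comm H Q
  set u := Matrix.trace (Q*H) + Matrix.trace (H*Q) with hu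
  have hua : |u| ≤ 2 * (‖Q‖ * ‖H‖) := by
    rw [hu, htHQ]
    calc |Matrix.trace (Q*H) + Matrix.trace (Q*H)| ≤ |Matrix.trace (Q*H)| + |Matrix.trace (Q*H)| := abs_add_le _ _
      _ ≤ _ := by nlinarith
  have tri : ‖-(α • H) + β • (Q*H + H*Q - (u/3) • (1:M3))
      - ((γ * Matrix.trace (Q*Q)) • H + (γ * u) • Q)‖
      ≤ ‖α • H‖ + ‖β • (Q*H + H*Q - (u/3) • (1:M3))‖
        + (‖(γ * Matrix.trace (Q*Q)) • H‖ + ‖(γ * u) • Q‖) := by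
    refine (norm_sub_le _ _).trans ?_
    gcongr
    · exact (norm_add_le _ _).trans (by rw [norm_neg])
    · exact norm_add_le _ _
  refine tri.trans ?_
  have e1 : ‖α • H‖ = |α| * ‖H‖ := by rw [norm_smul, Real.norm_eq_abs]
  have e2 : ‖β • (Q*H + H*Q - (u/3) • (1:M3))‖ ≤ |β| * (‖Q‖*‖H‖ + ‖H‖*‖Q‖ + |u| / 3 * ‖(1:M3)‖) := by
    rw [norm_smul, Real.norm_eq_abs]
    gcongr
    refine (norm_sub_le _ _).trans ?_
    gcongr
    · refine (norm_add_le _ _).trans ?_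
      gcongr
      · exact norm_mul_le Q H
      · exact norm_mul_le H Q
    · rw [norm_smul, Real.norm_eq_abs, abs_div]
      simp only [abs_of_nonneg (by norm_num : (0:ℝ) ≤ (3:ℝ))]
      rfl
  have e3 : ‖(γ * Matrix.trace (Q*Q)) • H‖ ≤ γ * a^2 * ‖H‖ := by
    rw [norm_smul, Real.norm_eq_abs, abs_of_nonneg (by positivity)]
    gcongr
  have e4 : ‖(γ * u) • Q‖ ≤ γ * (2 * (a * ‖H‖)) * a := by
    rw [norm_smul, Real.norm_eq_abs, abs_mul, abs_of_nonneg hγ]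
    have h5 : |u| * ‖Q‖ ≤ (2 * (a * ‖H‖)) * a := by
      have f2 : |u| ≤ 2 * (a * ‖H‖) := by
        refine hua.trans ?_
        have : ‖Q‖ * ‖H‖ ≤ a * ‖H‖ := mul_le_mul_of_nonneg_right hQa hH0
        linarith
      exact mul_le_mul f2 hQa hQ0 (by positivity)
    nlinarith [abs_nonneg u]
  have h1 : ‖(1:M3)‖ ≤ 2 := norm_one_le
  have h10 : (0:ℝ) ≤ ‖(1:M3)‖ := norm_nonneg _
  have hb0 : (0:ℝ) ≤ |β| := abs_nonneg β
  have ha0 : (0:ℝ) ≤ |α| := abs_nonneg α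
  have f1 : ‖Q‖ * ‖H‖ ≤ a * ‖H‖ := mul_le_mul_of_nonneg_right hQa hH0
  have f1' : ‖H‖ * ‖Q‖ ≤ ‖H‖ * a := mul_le_mul_of_nonneg_left hQa hH0
  have f2 : |u| ≤ 2 * (a * ‖H‖) := by refine hua.trans ?_; linarith
  have f3 : |u| / 3 * ‖(1:M3)‖ ≤ (2 * (a * ‖H‖))/3 * 2 := by
    have : |u|/3 ≤ (2 * (a * ‖H‖))/3 := by linarith
    exact mul_le_mul this h1 h10 (by positivity)
  have e2' : |β| * (‖Q‖*‖H‖ + ‖H‖*‖Q‖ + |u| / 3 * ‖(1:M3)‖)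
      ≤ |β| * (a*‖H‖ + ‖H‖*a + (2 * (a * ‖H‖))/3 * 2) :=
    mul_le_mul_of_nonneg_left (by linarith) hb0
  have e12 : |α| * ‖H‖ ≤ |α| * ‖H‖ := le_refl _
  nlinarith [mul_nonneg (mul_nonneg hb0 ha) hH0]

lemma mip_add_left (A B C : M3) : mip (A + B) C = mip A C + mip B C := by
  rw [mip_comm, mip_add_right, mip_comm C A, mip_comm C B]

lemma cubic_bound (γ β x s : ℝ) (hγ : 0 < γ) (hs : 0 ≤ s) (hx : x^2 ≤ s^3) :
    β * x ≤ β^2/(2*γ) * s + γ/2 * s^2 := by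
  rcases eq_or_lt_of_le hs with h|h
  · rw [← h] at hx
    norm_num at hx
    have hx0 : x = 0 := hx
    rw [hx0, ← h]; norm_num
  · have key : 0 ≤ s * (γ^2*s^2 + β^2*s - 2*γ*β*x) := by nlinarith [sq_nonneg (γ*x - β*s)]
    have h2 : 0 ≤ γ^2*s^2 + β^2*s - 2*γ*β*x := by
      by_contra hcon
      push_neg at hcon
      nlinarith
    have e : β^2/(2*γ) * s + γ/2 * s^2 - β * x = (γ^2*s^2 + β^2*s - 2*γ*β*x)/(2*γ) := by
      field_simp; ring
    nlinarith [div_nonneg h2 (by linarith : (0:ℝ) ≤ 2*γ)]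

lemma mip_Q_fQ_le (α β γ : ℝ) (Q : M3) (hγ : 0 < γ) (hQ : Qᵀ = Q)
    (htr : Matrix.trace Q = 0) :
    mip Q (fQ α β γ Q) ≤ -((α - β^2/(2*γ)) * mip Q Q + γ/2 * (mip Q Q)^2) := by
  set s := mip Q Q with hsdef
  have hs0 : 0 ≤ s := mip_self_nonneg Q
  have ht : Matrix.trace (Q*Q) = s := trace_mul_eq_mip Q Q hQ
  set x := mip Q (Q*Q) with hxdef
  have hexp : mip Q (fQ α β γ Q) = -(α*s) + β*(x - s/3*0) - γ*s*s := by
    unfold fQ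
    simp only [mip_sub_right, mip_add_right, mip_neg_right, mip_smul_right,
      mip_one_right Q htr, ht]
    try ring
  have hx2 : x^2 ≤ s^3 := by
    have hcs := mip_cs Q (Q*Q)
    have hQQ : mip (Q*Q) (Q*Q) ≤ s^2 := by
      have h1 : ‖Q*Q‖ ≤ ‖Q‖ * ‖Q‖ := norm_mul_le Q Q
      have h2 : mip (Q*Q) (Q*Q) = ‖Q*Q‖^2 := (norm_sq_eq_mip _).symm
      have h3 : s = ‖Q‖^2 := by rw [hsdef, ← norm_sq_eq_mip]
      nlinarith [norm_nonneg (Q*Q), norm_nonneg Q]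
    calc x^2 ≤ s * mip (Q*Q) (Q*Q) := hcs
      _ ≤ s * s^2 := by nlinarith
      _ = s^3 := by ring
  have hcb := cubic_bound γ β x s hγ hs0 hx2
  rw [hexp]
  nlinarith

lemma norm_le_of_mip (Q : M3) (a : ℝ) (ha : 0 ≤ a) (h : mip Q Q ≤ a^2) : ‖Q‖ ≤ a := by
  have h2 := norm_sq_eq_mip Q
  nlinarith [norm_nonneg Q]

lemma step_bound (α β γ a : ℝ) (hγ : 0 < γ) (ha : 0 < a)
    (hε : 0 < γ*a^2/2 + (α - β^2/(2*γ))) :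
    ∃ τ₀ : ℝ, 0 < τ₀ ∧ ∀ τ : ℝ, 0 < τ → τ ≤ τ₀ → ∀ Q : M3, Qᵀ = Q → Matrix.trace Q = 0 →
      mip Q Q ≤ a^2 →
      mip (Q + τ • fQ α β γ Q + (τ^2/2) • fderiv ℝ (fQ α β γ) Q (fQ α β γ Q))
        (Q + τ • fQ α β γ Q + (τ^2/2) • fderiv ℝ (fQ α β γ) Q (fQ α β γ Q)) ≤ a^2 := by
  set c := α - β^2/(2*γ) with hc
  set ε := γ*a^2/2 + c with hεdef
  set F := |α| * a + 2 * |β| * a^2 + γ * a^3 with hF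
  have hF0 : 0 ≤ F := by positivity
  set Db := (|α| + 4 * |β| * a + 3 * γ * a^2) * F with hDb
  have hDb0 : 0 ≤ Db := by positivity
  set M := a*Db + (F + Db/2)^2 with hM
  have hM0 : 0 ≤ M := by positivity
  refine ⟨min 1 (min (ε*a^2/(M+1)) (min ((ε/γ)/(2*a*F+M+1)) (1/ε))), by positivity, ?_⟩
  intro τ hτ hτ0 Q hQs hQt hQn
  have hτ1 : τ ≤ 1 := hτ0.trans (min_le_left _ _)
  have hτ2 : τ * (M+1) ≤ ε*a^2 := by
    have := hτ0.trans ((min_le_right _ _).trans (min_le_left _ _))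
    rw [le_div_iff₀ (by positivity)] at this
    linarith
  have hτ3 : τ * (2*a*F+M+1) ≤ ε/γ := by
    have := hτ0.trans ((min_le_right _ _).trans ((min_le_right _ _).trans (min_le_left _ _)))
    rw [le_div_iff₀ (by positivity)] at this
    linarith
  have hτ4 : τ * ε ≤ 1 := by
    have := hτ0.trans ((min_le_right _ _).trans ((min_le_right _ _).trans (min_le_right _ _)))
    rw [le_div_iff₀ hε] at this
    linarith
  set s := mip Q Q with hsdef
  have hs0 : 0 ≤ s := mip_self_nonneg Q
  have hQnorm : ‖Q‖ ≤ a := norm_le_of_mip Q a ha.le hQn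
  set f := fQ α β γ Q with hf
  set D := fderiv ℝ (fQ α β γ) Q f with hD
  have hfF : ‖f‖ ≤ F := norm_fQ_le α β γ a Q hγ.le ha.le hQs hQnorm
  have hDDb : ‖D‖ ≤ Db := by
    refine (norm_D_le α β γ a Q f hγ.le ha.le hQs hQnorm).trans ?_
    rw [hDb]
    gcongr
  set R := τ • f + (τ^2/2) • D with hR
  have hGR : Q + τ • f + (τ^2/2) • D = Q + R := by rw [hR, add_assoc]
  have hRn : ‖R‖ ≤ τ*F + τ^2/2*Db := by
    refine (norm_add_le _ _).trans ?_
    rw [norm_smul, norm_smul, Real.norm_eq_abs, Real.norm_eq_abs,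
      abs_of_pos hτ, abs_of_nonneg (by positivity : (0:ℝ) ≤ τ^2/2)]
    gcongr
  have hRR : mip R R ≤ τ^2 * (F + Db/2)^2 := by
    have h2 : mip R R = ‖R‖^2 := (norm_sq_eq_mip R).symm
    have hb : ‖R‖ ≤ τ*(F + Db/2) := by
      nlinarith [mul_nonneg (mul_nonneg hτ.le (by linarith : (0:ℝ) ≤ 1 - τ)) hDb0]
    have hsq := pow_le_pow_left₀ (norm_nonneg R) hb 2
    rw [h2]
    nlinarith [hsq]
  have hQR : mip Q R = τ * mip Q f + τ^2/2 * mip Q D := by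
    rw [hR, mip_add_right, mip_smul_right, mip_smul_right]
  have hQD : mip Q D ≤ a * Db := by
    refine (mip_le_norm Q D).trans ?_
    exact mul_le_mul hQnorm hDDb (norm_nonneg D) ha.le
  have hQf' : mip Q f ≤ a * F := by
    refine (mip_le_norm Q f).trans ?_
    exact mul_le_mul hQnorm hfF (norm_nonneg f) ha.le
  have hQf : mip Q f ≤ -(c*s + γ/2*s^2) := mip_Q_fQ_le α β γ Q hγ hQs hQt
  have hexp : mip (Q+R) (Q+R) = s + 2*(mip Q R) + mip R R := by
    simp only [mip_add_left, mip_add_right]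
    rw [mip_comm R Q]
    ring
  clear_value c ε F Db M s f D R
  rw [hGR, hexp]
  have key : s + 2*(mip Q R) + mip R R ≤ s + 2*τ*(mip Q f) + τ^2*M := by
    rw [hQR]
    nlinarith [mul_le_mul_of_nonneg_left hQD (by positivity : (0:ℝ) ≤ τ^2), hRR]
  have p2 : τ^2*M ≤ τ*M := by
    nlinarith [mul_nonneg (mul_nonneg hτ.le (by linarith : (0:ℝ) ≤ 1-τ)) hM0]
  rcases le_or_gt s (a^2 - ε/γ) with hcase|hcase
  · have p1 : τ * mip Q f ≤ τ*(a*F) := mul_le_mul_of_nonneg_left hQf' hτ.le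
    have p3 : τ*(2*a*F+M+1) = 2*(τ*(a*F)) + τ*M + τ := by ring
    linarith
  · have hpe : ε/2 ≤ c + γ/2*s := by
      have hlt : γ/2 * (a^2 - ε/γ) < γ/2 * s := by
        apply mul_lt_mul_of_pos_left hcase (by positivity)
      have he : γ/2 * (a^2 - ε/γ) = γ*a^2/2 - ε/2 := by field_simp
      rw [he] at hlt
      have hee : ε = γ*a^2/2 + c := hεdef
      linarith
    have hQf2 : mip Q f ≤ -(s*(ε/2)) := by
      nlinarith [mul_nonneg hs0 (by linarith : (0:ℝ) ≤ c + γ/2*s - ε/2)]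
    have hsa : s ≤ a^2 := hQn
    have p4 : τ * mip Q f ≤ τ * (-(s*(ε/2))) := mul_le_mul_of_nonneg_left hQf2 hτ.le
    have e1 : s*(1 - τ*ε) = s + 2*(τ*(-(s*(ε/2)))) := by ring
    have h2 : s*(1 - τ*ε) ≤ a^2*(1 - τ*ε) :=
      mul_le_mul_of_nonneg_right hsa (by linarith)
    have p5 : τ^2*M ≤ τ*(ε*a^2) := by
      have h6 : τ*M ≤ ε*a^2 := by linarith [hτ2]
      have h7 := mul_le_mul_of_nonneg_left h6 hτ.le
      linarith [h7]
    have e2 : a^2*(1-τ*ε) + τ*(ε*a^2) = a^2 := by ring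
    linarith

lemma frob_iff_mip (A : M3) (a : ℝ) (ha : 0 ≤ a) :
    frobNorm A ≤ a ↔ mip A A ≤ a^2 := by
  unfold frobNorm
  rw [trace_transpose_mul_eq_mip]
  constructor
  · intro h
    have h1 := Real.sq_sqrt (mip_self_nonneg A)
    nlinarith [Real.sqrt_nonneg (mip A A)]
  · intro h
    calc Real.sqrt (mip A A) ≤ Real.sqrt (a^2) := Real.sqrt_le_sqrt h
      _ = a := Real.sqrt_sq ha

/-- Discrete maximum bound principle for the second-order scheme
`Q_{m+1} = Q_m + τ·f(Q_m) + (τ²/2)·Df(Q_m)[f(Q_m)]`. -/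
theorem stmt15 (α β γ : ℝ) (hγ : 0 < γ) (b : ℝ) (hb : b = β ^ 2 / γ ^ 2 - 2 * α / γ)
    (a : ℝ) (ha : 0 < a) (hba : b < a ^ 2) :
    ∃ τ₀ : ℝ, 0 < τ₀ ∧
      ∀ τ : ℝ, 0 < τ → τ ≤ τ₀ →
        ∀ Q : ℕ → Matrix (Fin 3) (Fin 3) ℝ,
          (∀ m : ℕ, Q (m + 1) = Q m + τ • fQ α β γ (Q m)
              + (τ ^ 2 / 2) • fderiv ℝ (fQ α β γ) (Q m) (fQ α β γ (Q m))) →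
          (Q 0)ᵀ = Q 0 → Matrix.trace (Q 0) = 0 → frobNorm (Q 0) ≤ a →
          ∀ m : ℕ, (Q m)ᵀ = Q m ∧ Matrix.trace (Q m) = 0 ∧ frobNorm (Q m) ≤ a := by
  have hε : 0 < γ*a^2/2 + (α - β^2/(2*γ)) := by
    rw [hb] at hba
    have h1 : (β^2/γ^2 - 2*α/γ) * (γ/2) < a^2 * (γ/2) :=
      mul_lt_mul_of_pos_right hba (by positivity)
    have h2 : (β^2/γ^2 - 2*α/γ) * (γ/2) = β^2/(2*γ) - α := by field_simp
    rw [h2] at h1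
    linarith
  obtain ⟨τ₀, hτ₀, hstep⟩ := step_bound α β γ a hγ ha hε
  refine ⟨τ₀, hτ₀, ?_⟩
  intro τ hτ hττ Q hrec h0s h0t h0n
  have key : ∀ m : ℕ, (Q m)ᵀ = Q m ∧ Matrix.trace (Q m) = 0 ∧ mip (Q m) (Q m) ≤ a^2 := by
    intro m
    induction m with
    | zero => exact ⟨h0s, h0t, (frob_iff_mip (Q 0) a ha.le).mp h0n⟩
    | succ n ih =>
      obtain ⟨hs, ht, hn⟩ := ih
      have hfs := fQ_symm α β γ (Q n) hs
      have hft := fQ_traceless α β γ (Q n) ht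
      rw [hrec n, pow_two]
      refine ⟨?_, ?_, ?_⟩
      · simp [Matrix.transpose_add, Matrix.transpose_smul, hs, hfs,
          D_symm α β γ (Q n) (fQ α β γ (Q n)) hs hfs]
      · simp [Matrix.trace_add, Matrix.trace_smul, ht, hft,
          D_traceless α β γ (Q n) (fQ α β γ (Q n)) ht hft]
      · have := hstep τ hτ hττ (Q n) hs ht hn
        rw [pow_two] at this
        exact this
  intro m
  obtain ⟨hs, ht, hn⟩ := key m
  exact ⟨hs, ht, (frob_iff_mip (Q m) a ha.le).mpr hn⟩
end
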